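/- Fix α ∈ (1,2], assume g ≠ 0 and τ ∈ (0, 1/λ_max], and define the restrictions q̄(β) = q(β p(α)) and m̄_α(β) = m_α(β p(α)) for β ∈ ℝ. Then β = 1 is the unique minimizer of m̄_α over ℝ, q̄ is a strictly convex univariate quadratic, and its unique minimizer β_q = −⟨g, p(α)⟩ / (p(α)ᵀ Q p(α)) satisfies β_q ≥ 1. -/

import Mathlib

set_option maxHeartbeats 1000000


open scoped RealInnerProductSpace

/-- The dogleg path: `p(α) = -τ g` for `α ∈ (0,1]`, and
`p(α) = -τ g + (α-1)(-Q⁻¹ g + τ g)` for `α ∈ (1,2]`. -/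
noncomputable def doglegPath {n : ℕ} (τ : ℝ) (g : EuclideanSpace ℝ (Fin n))
    (Qinv : EuclideanSpace ℝ (Fin n) →ₗ[ℝ] EuclideanSpace ℝ (Fin n)) (α : ℝ) :
    EuclideanSpace ℝ (Fin n) :=
  if α ≤ 1 then (-τ) • g else (-τ) • g + (α - 1) • (-(Qinv g) + τ • g)

/-- The dogleg step size `τ_α = -‖p(α)‖² / ⟨g, p(α)⟩`. -/
noncomputable def doglegTau {n : ℕ} (τ : ℝ) (g : EuclideanSpace ℝ (Fin n))
    (Qinv : EuclideanSpace ℝ (Fin n) →ₗ[ℝ] EuclideanSpace ℝ (Fin n)) (α : ℝ) : ℝ :=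
  -‖doglegPath τ g Qinv α‖ ^ 2 / ⟪g, doglegPath τ g Qinv α⟫

/-- `g_α = (⟨g, p(α)⟩ / ‖p(α)‖²) p(α)`. -/
noncomputable def doglegG {n : ℕ} (τ : ℝ) (g : EuclideanSpace ℝ (Fin n))
    (Qinv : EuclideanSpace ℝ (Fin n) →ₗ[ℝ] EuclideanSpace ℝ (Fin n)) (α : ℝ) :
    EuclideanSpace ℝ (Fin n) :=
  (⟪g, doglegPath τ g Qinv α⟫ / ‖doglegPath τ g Qinv α‖ ^ 2) • doglegPath τ g Qinv α

/-- The (shifted) quadratic model `q(x) = ⟨g, x⟩ + (1/2) xᵀ Q x`. -/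
noncomputable def quadModel {n : ℕ}
    (Q : EuclideanSpace ℝ (Fin n) →ₗ[ℝ] EuclideanSpace ℝ (Fin n))
    (g x : EuclideanSpace ℝ (Fin n)) : ℝ :=
  ⟪g, x⟫ + (1 / 2) * ⟪Q x, x⟫

/-- The surrogate `m_α(x) = ⟨g_α, x⟩ + (1/(2 τ_α)) ‖x‖²`. -/
noncomputable def doglegSurrogate {n : ℕ} (τ : ℝ) (g : EuclideanSpace ℝ (Fin n))
    (Qinv : EuclideanSpace ℝ (Fin n) →ₗ[ℝ] EuclideanSpace ℝ (Fin n)) (α : ℝ)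
    (x : EuclideanSpace ℝ (Fin n)) : ℝ :=
  ⟪doglegG τ g Qinv α, x⟫ + (1 / (2 * doglegTau τ g Qinv α)) * ‖x‖ ^ 2
/-- Fix `α ∈ (1,2]`, assume `g ≠ 0` and `τ ∈ (0, 1/λ_max]`. Then `β = 1` is the
unique minimizer of `m̄_α(β) = m_α(β p(α))` over `ℝ`, `q̄(β) = q(β p(α))` is a
strictly convex univariate quadratic, and its unique minimizer
`β_q = -⟨g, p(α)⟩ / (p(α)ᵀ Q p(α))` satisfies `β_q ≥ 1`. -/
theorem dogleg_restriction_minimizers {n : ℕ}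
    (Q Qinv : EuclideanSpace ℝ (Fin n) →ₗ[ℝ] EuclideanSpace ℝ (Fin n))
    (hQsymm : ∀ x y : EuclideanSpace ℝ (Fin n), ⟪Q x, y⟫ = ⟪x, Q y⟫)
    (hQpd : ∀ x : EuclideanSpace ℝ (Fin n), x ≠ 0 → 0 < ⟪Q x, x⟫)
    (hinv₁ : ∀ x, Q (Qinv x) = x) (hinv₂ : ∀ x, Qinv (Q x) = x)
    (lamMax lamMin : ℝ) (hlamMaxPos : 0 < lamMax) (hlamMinPos : 0 < lamMin)
    (hRayleighMax : ∀ x : EuclideanSpace ℝ (Fin n), ⟪Q x, x⟫ ≤ lamMax * ‖x‖ ^ 2)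
    (hRayleighMin : ∀ x : EuclideanSpace ℝ (Fin n), lamMin * ‖x‖ ^ 2 ≤ ⟪Q x, x⟫)
    (g : EuclideanSpace ℝ (Fin n)) (hg : g ≠ 0) (τ : ℝ)
    (hτpos : 0 < τ) (hτle : τ ≤ 1 / lamMax)
    (α : ℝ) (hα₁ : 1 < α) (hα₂ : α ≤ 2) :
    (∀ β : ℝ, β ≠ 1 →
      doglegSurrogate τ g Qinv α ((1 : ℝ) • doglegPath τ g Qinv α)
        < doglegSurrogate τ g Qinv α (β • doglegPath τ g Qinv α)) ∧
    (∃ a b c : ℝ, 0 < a ∧ ∀ β : ℝ,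
      quadModel Q g (β • doglegPath τ g Qinv α) = a * β ^ 2 + b * β + c) ∧
    (∀ β : ℝ, β ≠ -⟪g, doglegPath τ g Qinv α⟫ / ⟪Q (doglegPath τ g Qinv α), doglegPath τ g Qinv α⟫ →
      quadModel Q g ((-⟪g, doglegPath τ g Qinv α⟫ / ⟪Q (doglegPath τ g Qinv α), doglegPath τ g Qinv α⟫)
          • doglegPath τ g Qinv α)
        < quadModel Q g (β • doglegPath τ g Qinv α)) ∧
    1 ≤ -⟪g, doglegPath τ g Qinv α⟫ / ⟪Q (doglegPath τ g Qinv α), doglegPath τ g Qinv α⟫ := by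
  classical
  set p := doglegPath τ g Qinv α with hpdef
  set u := Qinv g with hudef
  have hαle : ¬ α ≤ 1 := not_le.mpr hα₁
  have hp : p = (-τ) • g + (α - 1) • (-u + τ • g) := by
    rw [hpdef, doglegPath, if_neg hαle]
  have hQu : Q u = g := hinv₁ g
  set G2 := ‖g‖ ^ 2 with hG2def
  set GU := ⟪g, u⟫ with hGUdef
  set QG := ⟪Q g, g⟫ with hQGdef
  have hgg : ⟪g, g⟫ = G2 := real_inner_self_eq_norm_sq g
  have hQgu : ⟪Q g, u⟫ = G2 := by rw [hQsymm, hQu, hgg]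
  have hG2pos : 0 < G2 := by
    have := norm_pos_iff.mpr hg
    positivity
  have hQGpos : 0 < QG := hQpd g hg
  have hQGle : QG ≤ lamMax * G2 := hRayleighMax g
  have hτl : τ * lamMax ≤ 1 := by
    rw [le_div_iff₀ hlamMaxPos] at hτle; linarith
  -- Cauchy-Schwarz in the Q-inner product
  have hCS : G2 ^ 2 ≤ GU * QG := by
    set t : ℝ := -G2 / QG with htdef
    have htQG : t * QG = -G2 := by rw [htdef, div_mul_cancel₀ _ hQGpos.ne']
    have h0 : 0 ≤ ⟪Q (u + t • g), u + t • g⟫ := by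
      rcases eq_or_ne (u + t • g) 0 with h | h
      · rw [h]; simp
      · exact (hQpd _ h).le
    have hexp : ⟪Q (u + t • g), u + t • g⟫ = GU + 2 * t * G2 + t ^ 2 * QG := by
      rw [map_add, map_smul]
      simp only [inner_add_left, inner_add_right, real_inner_smul_left,
        real_inner_smul_right, hQu, hgg, hQgu, ← hGUdef, ← hQGdef]
      ring
    rw [hexp] at h0
    nlinarith [h0, htQG, hQGpos]
  have hGUpos : 0 < GU := by nlinarith
  have hGUτ : τ * G2 ≤ GU := by
    nlinarith [mul_le_mul_of_nonneg_left hQGle hGUpos.le, mul_pos hτpos hG2pos]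
  have e1 : ⟪g, p⟫ = -τ * G2 + (α - 1) * (-GU + τ * G2) := by
    rw [hp]
    simp only [inner_add_right, inner_neg_right, real_inner_smul_right, hgg, ← hGUdef]
  have hQp : Q p = (-τ) • Q g + (α - 1) • (-g + τ • Q g) := by
    rw [hp]; simp [map_add, map_smul, map_neg, hQu]
  have e2 : ⟪Q p, p⟫ = τ ^ 2 * QG + 2 * (α - 1) * τ * (G2 - τ * QG)
      + (α - 1) ^ 2 * (GU - 2 * τ * G2 + τ ^ 2 * QG) := by
    rw [hQp, hp]
    simp only [inner_add_left, inner_add_right, inner_neg_left, inner_neg_right,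
      real_inner_smul_left, real_inner_smul_right, hgg, hQgu, ← hGUdef, ← hQGdef,
      real_inner_comm u g]
    ring
  have hb : ⟪g, p⟫ < 0 := by
    rw [e1]
    nlinarith [mul_nonneg (by linarith : (0:ℝ) ≤ α - 1) (by linarith : 0 ≤ GU - τ * G2),
      mul_pos hτpos hG2pos]
  have hpne : p ≠ 0 := by
    intro h
    rw [h, inner_zero_right] at hb
    exact lt_irrefl _ hb
  have hP : 0 < ‖p‖ ^ 2 := by
    have := norm_pos_iff.mpr hpne
    positivity
  have hpp : ⟪p, p⟫ = ‖p‖ ^ 2 := real_inner_self_eq_norm_sq p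
  -- surrogate restriction
  have hm : ∀ γ : ℝ, doglegSurrogate τ g Qinv α (γ • p)
      = γ * ⟪g, p⟫ - γ ^ 2 * ⟪g, p⟫ / 2 := by
    intro γ
    rw [doglegSurrogate, doglegG, doglegTau, ← hpdef]
    have hns : ‖γ • p‖ ^ 2 = γ ^ 2 * ‖p‖ ^ 2 := by
      rw [norm_smul, mul_pow, Real.norm_eq_abs, sq_abs]
    rw [hns, real_inner_smul_left, real_inner_smul_right, hpp]
    field_simp
    ring
  -- quadratic restriction
  have hq : ∀ γ : ℝ, quadModel Q g (γ • p)
      = ⟪g, p⟫ * γ + ⟪Q p, p⟫ / 2 * γ ^ 2 := by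
    intro γ
    rw [quadModel, map_smul, real_inner_smul_left, real_inner_smul_right,
      real_inner_smul_right]
    ring
  have hApos : 0 < ⟪Q p, p⟫ := hQpd p hpne
  -- the key inequality for part 4
  have hS : 0 ≤ GU - 2 * τ * G2 + τ ^ 2 * QG := by
    have hexp : ⟪Q (u + (-τ) • g), u + (-τ) • g⟫ = GU - 2 * τ * G2 + τ ^ 2 * QG := by
      rw [map_add, map_smul]
      simp only [inner_add_left, inner_add_right, real_inner_smul_left,
        real_inner_smul_right, hQu, hgg, hQgu, ← hGUdef, ← hQGdef]
      ring
    rcases eq_or_ne (u + (-τ) • g) 0 with h | h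
    · rw [h] at hexp
      simp only [map_zero, inner_zero_left] at hexp
      linarith
    · rw [← hexp]; exact (hQpd _ h).le
  have hGQτ : 0 ≤ G2 - τ * QG := by nlinarith
  have hsum : ⟪Q p, p⟫ + ⟪g, p⟫ ≤ 0 := by
    have hid : ⟪Q p, p⟫ + ⟪g, p⟫
        = (2 - α) * (-(τ * (G2 - τ * QG)) - (α - 1) * (GU - 2 * τ * G2 + τ ^ 2 * QG)) := by
      rw [e1, e2]; ring
    rw [hid]
    have h1 : 0 ≤ (2 - α) * (τ * (G2 - τ * QG)) :=
      mul_nonneg (by linarith) (mul_nonneg hτpos.le hGQτ)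
    have h2 : 0 ≤ (2 - α) * ((α - 1) * (GU - 2 * τ * G2 + τ ^ 2 * QG)) :=
      mul_nonneg (by linarith) (mul_nonneg (by linarith) hS)
    nlinarith
  refine ⟨?_, ?_, ?_, ?_⟩
  · intro β hβ
    rw [hm 1, hm β]
    have h1 : β - 1 ≠ 0 := sub_ne_zero.mpr hβ
    have h2 : 0 < (β - 1) ^ 2 :=
      lt_of_le_of_ne (sq_nonneg _) (Ne.symm (pow_ne_zero 2 h1))
    nlinarith [mul_pos (neg_pos.mpr hb) h2]
  · exact ⟨⟪Q p, p⟫ / 2, ⟪g, p⟫, 0, half_pos hApos, fun β => by rw [hq]; ring⟩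
  · intro β hβ
    rw [hq, hq]
    have hAne : ⟪Q p, p⟫ ≠ 0 := hApos.ne'
    have h3 : ⟪Q p, p⟫ * β + ⟪g, p⟫ ≠ 0 := by
      intro h
      apply hβ
      rw [eq_div_iff hAne]
      linarith
    have h4 : 0 < (⟪Q p, p⟫ * β + ⟪g, p⟫) ^ 2 :=
      lt_of_le_of_ne (sq_nonneg _) (Ne.symm (pow_ne_zero 2 h3))
    have key : ∀ A B : ℝ, A ≠ 0 →
        B * (-B / A) + A / 2 * (-B / A) ^ 2 = -B ^ 2 / (2 * A) := by
      intro A B hA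
      field_simp
      ring
    rw [key _ _ hAne, div_lt_iff₀ (by positivity : (0:ℝ) < 2 * ⟪Q p, p⟫)]
    nlinarith [h4, hApos]
  · rw [le_div_iff₀ hApos]
    linarith
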